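/- Let P be an r-differential poset, k a positive integer, and n ≥ 0. Define v_{n,k} := Σ_{j=0}^{n} (−1)^j U^j t_{n−j} / (j+1)!_{r,k} in ℚP_n, where t_0 ⋖ t_1 ⋖ t_2 ⋖ ⋯ is a saturated chain with rank(t_m) = m such that each t_m covers at most one element of P. Then (DU_n + kI) v_{n,k} = t_n. -/

import Mathlib

open Matrix

variable {α : Type*}

/-- The generalized factorial `ℓ!_{r,k} = (rℓ+k)(r(ℓ-1)+k)⋯(r·1+k)`. -/
def genFac (r k ℓ : ℕ) : ℕ := ∏ i ∈ Finset.range ℓ, (r * (i + 1) + k)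

open Classical in
/-- The matrix of the up map `U_n : ℚP_n → ℚP_{n+1}`. -/
noncomputable def upMat [PartialOrder α] (rk : α → ℕ) (n : ℕ) :
    Matrix {x : α // rk x = n + 1} {x : α // rk x = n} ℚ :=
  Matrix.of fun z x => if x.1 ⋖ z.1 then 1 else 0

/-- The matrix of `DU_n := D_{n+1} U_n`. -/
noncomputable def duMat [PartialOrder α] (rk : α → ℕ)
    [∀ n : ℕ, Fintype {x : α // rk x = n}] (n : ℕ) :
    Matrix {x : α // rk x = n} {x : α // rk x = n} ℚ :=
  (upMat rk n)ᵀ * upMat rk n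

/-- `upIter rk m j v` is `U^j v` for `v ∈ ℚP_m`. -/
noncomputable def upIter [PartialOrder α] (rk : α → ℕ)
    [∀ n : ℕ, Fintype {x : α // rk x = n}] (m : ℕ) :
    (j : ℕ) → ({x : α // rk x = m} → ℚ) → ({x : α // rk x = m + j} → ℚ)
  | 0, v => v
  | j + 1, v => (upMat rk (m + j)).mulVec (upIter rk m j v)

/-- Transport a vector along an equality of ranks. -/
noncomputable def rankCast [PartialOrder α] (rk : α → ℕ) (m n : ℕ)
    (v : {x : α // rk x = m} → ℚ) : {x : α // rk x = n} → ℚ :=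
  fun x => if h : rk x.1 = m then v ⟨x.1, h⟩ else 0

open Classical in
/-- The standard basis vector of `y` in `ℚP_n`. -/
noncomputable def basisVec [PartialOrder α] (rk : α → ℕ) (n : ℕ) (y : α) :
    {x : α // rk x = n} → ℚ :=
  fun x => if x.1 = y then 1 else 0

/-- The vector `v_{n,k} := Σ_{j=0}^n (-1)^j U^j t_{n-j} / (j+1)!_{r,k}`. -/
noncomputable def vVec [PartialOrder α] (rk : α → ℕ)
    [∀ n : ℕ, Fintype {x : α // rk x = n}] (t : ℕ → α) (r k n : ℕ) :
    {x : α // rk x = n} → ℚ :=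
  ∑ j ∈ Finset.range (n + 1),
    ((-1 : ℚ) ^ j / (genFac r k (j + 1) : ℚ)) •
      rankCast rk ((n - j) + j) n (upIter rk (n - j) j (basisVec rk (n - j) (t (n - j))))

section Aux

set_option linter.unusedSectionVars false

open Classical

variable [PartialOrder α] (rk : α → ℕ) [∀ n : ℕ, Fintype {x : α // rk x = n}]

lemma rankCast_self (m : ℕ) (v : {x : α // rk x = m} → ℚ) :
    rankCast rk m m v = v := by
  funext x
  exact dif_pos x.2

lemma rankCast_ne (m n : ℕ) (h : m ≠ n) (v : {x : α // rk x = m} → ℚ) :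
    rankCast rk m n v = 0 := by
  funext x
  have : rk x.1 ≠ m := by rw [x.2]; exact fun hh => h hh.symm
  simp [rankCast, this]

lemma rankCast_comp (a b c : ℕ) (h : a = b) (v : {x : α // rk x = a} → ℚ) :
    rankCast rk b c (rankCast rk a b v) = rankCast rk a c v := by
  subst h
  rw [rankCast_self]

lemma rankCast_add (m n : ℕ) (v w : {x : α // rk x = m} → ℚ) :
    rankCast rk m n (v + w) = rankCast rk m n v + rankCast rk m n w := by
  funext x
  by_cases h : rk x.1 = m <;> simp [rankCast, h]

lemma rankCast_smul (m n : ℕ) (a : ℚ) (v : {x : α // rk x = m} → ℚ) :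
    rankCast rk m n (a • v) = a • rankCast rk m n v := by
  funext x
  by_cases h : rk x.1 = m <;> simp [rankCast, h]

lemma duMat_mulVec_rankCast (m n : ℕ) (h : m = n) (v : {x : α // rk x = m} → ℚ) :
    (duMat rk n).mulVec (rankCast rk m n v) = rankCast rk m n ((duMat rk m).mulVec v) := by
  subst h
  rw [rankCast_self, rankCast_self]

lemma upMat_mulVec_rankCast (a b : ℕ) (h : a = b) (v : {x : α // rk x = a} → ℚ) :
    (upMat rk b).mulVec (rankCast rk a b v)
      = rankCast rk (a + 1) (b + 1) ((upMat rk a).mulVec v) := by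
  subst h
  rw [rankCast_self, rankCast_self]

lemma upIter_add (m j : ℕ) (v w : {x : α // rk x = m} → ℚ) :
    upIter rk m j (v + w) = upIter rk m j v + upIter rk m j w := by
  induction j with
  | zero => rfl
  | succ j ih => simp only [upIter, ih, Matrix.mulVec_add]

lemma upIter_smul (m j : ℕ) (a : ℚ) (v : {x : α // rk x = m} → ℚ) :
    upIter rk m j (a • v) = a • upIter rk m j v := by
  induction j with
  | zero => rfl
  | succ j ih => simp only [upIter, ih, Matrix.mulVec_smul]

/-- `U^j (U v)` is `U^{j+1} v` up to a rank cast. -/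
lemma upIter_succ_left (m : ℕ) (v : {x : α // rk x = m} → ℚ) :
    ∀ j : ℕ, upIter rk (m + 1) j ((upMat rk m).mulVec v)
      = rankCast rk (m + (j + 1)) ((m + 1) + j) (upIter rk m (j + 1) v)
  | 0 => by
    rw [rankCast_self]
    rfl
  | j + 1 => by
    show (upMat rk (m + 1 + j)).mulVec (upIter rk (m + 1) j ((upMat rk m).mulVec v)) = _
    rw [upIter_succ_left m v j,
      upMat_mulVec_rankCast rk (m + (j + 1)) (m + 1 + j) (by omega)]
    rfl

end Aux

section Comb

set_option linter.unusedSectionVars false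

open Classical

variable [PartialOrder α] (rk : α → ℕ) [∀ n : ℕ, Fintype {x : α // rk x = n}]

lemma sum_indicator_eq_ncard (N : ℕ) (P : α → Prop) (hP : ∀ z, P z → rk z = N) :
    ∑ z : {x : α // rk x = N}, (if P z.1 then (1 : ℚ) else 0) = ({z | P z}.ncard : ℚ) := by
  have himg : {z | P z} = Subtype.val '' {z : {x : α // rk x = N} | P z.1} := by
    ext z
    constructor
    · intro hz; exact ⟨⟨z, hP z hz⟩, hz, rfl⟩
    · rintro ⟨w, hw, rfl⟩; exact hw
  rw [himg, Set.ncard_image_of_injective _ Subtype.val_injective,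
    Set.ncard_eq_toFinset_card']
  rw [Finset.sum_boole]
  congr 1
  simp [Set.toFinset_setOf]

lemma duMat_apply (hgrade : ∀ x y : α, x ⋖ y → rk y = rk x + 1)
    (N : ℕ) (x y : {x : α // rk x = N}) :
    duMat rk N x y = ({z : α | x.1 ⋖ z ∧ y.1 ⋖ z}.ncard : ℚ) := by
  have h1 : duMat rk N x y
      = ∑ z : {x : α // rk x = N + 1},
          (@ite ℚ (x.1 ⋖ z.1 ∧ y.1 ⋖ z.1) (Classical.propDecidable _) 1 0) := by
    rw [duMat, Matrix.mul_apply]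
    refine Finset.sum_congr rfl fun z _ => ?_
    by_cases hx : x.1 ⋖ z.1 <;> by_cases hy : y.1 ⋖ z.1 <;>
      simp [upMat, Matrix.transpose_apply, hx, hy]
  rw [h1]
  exact sum_indicator_eq_ncard rk (N + 1) (fun z => x.1 ⋖ z ∧ y.1 ⋖ z)
    (fun z hz => by rw [hgrade x.1 z hz.1, x.2])

lemma udMat_apply (hgrade : ∀ x y : α, x ⋖ y → rk y = rk x + 1)
    (N : ℕ) (x y : {x : α // rk x = N + 1}) :
    (upMat rk N * (upMat rk N)ᵀ) x y = ({w : α | w ⋖ x.1 ∧ w ⋖ y.1}.ncard : ℚ) := by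
  have h1 : (upMat rk N * (upMat rk N)ᵀ) x y
      = ∑ w : {x : α // rk x = N},
          (@ite ℚ (w.1 ⋖ x.1 ∧ w.1 ⋖ y.1) (Classical.propDecidable _) 1 0) := by
    rw [Matrix.mul_apply]
    refine Finset.sum_congr rfl fun w _ => ?_
    by_cases hx : w.1 ⋖ x.1 <;> by_cases hy : w.1 ⋖ y.1 <;>
      simp [upMat, Matrix.transpose_apply, hx, hy]
  rw [h1]
  refine sum_indicator_eq_ncard rk N (fun w => w ⋖ x.1 ∧ w ⋖ y.1) (fun w hw => ?_)
  have := hgrade w x.1 hw.1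
  rw [x.2] at this
  omega

/-- The commutation relation `DU = UD + rI` in matrix form. -/
lemma duMat_succ_eq (hgrade : ∀ x y : α, x ⋖ y → rk y = rk x + 1) (r : ℕ)
    (hD1 : ∀ x : α, {z : α | x ⋖ z}.ncard = {y : α | y ⋖ x}.ncard + r)
    (hD2 : ∀ x y : α, x ≠ y →
      {z : α | z ⋖ x ∧ z ⋖ y}.ncard = {z : α | x ⋖ z ∧ y ⋖ z}.ncard)
    (N : ℕ) :
    duMat rk (N + 1) = upMat rk N * (upMat rk N)ᵀ + (r : ℚ) • 1 := by
  ext x y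
  rw [Matrix.add_apply, duMat_apply rk hgrade, udMat_apply rk hgrade]
  by_cases hxy : x = y
  · subst hxy
    simp only [and_self]
    rw [hD1 x.1]
    push_cast
    simp [Matrix.smul_apply, Matrix.one_apply]
  · have hxy1 : x.1 ≠ y.1 := fun h => hxy (Subtype.ext h)
    rw [← hD2 x.1 y.1 hxy1]
    simp [Matrix.smul_apply, Matrix.one_apply, hxy]

end Comb

section Main1

set_option linter.unusedSectionVars false

open Classical

variable [PartialOrder α] [OrderBot α] (rk : α → ℕ) [∀ n : ℕ, Fintype {x : α // rk x = n}]

lemma covBy_below_finite (hgrade : ∀ x y : α, x ⋖ y → rk y = rk x + 1) (x : α) :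
    {z : α | z ⋖ x}.Finite := by
  apply Set.Finite.subset
    (Set.toFinite (Subtype.val '' (Set.univ : Set {z : α // rk z = rk x - 1})))
  intro z hz
  have := hgrade z x hz
  exact ⟨⟨z, by omega⟩, trivial, rfl⟩

lemma rk_zero_eq_bot (hgrade : ∀ x y : α, x ⋖ y → rk y = rk x + 1)
    (hdown : ∀ x : α, x ≠ ⊥ → ∃ y : α, y ⋖ x) (x : α) (hx : rk x = 0) : x = ⊥ := by
  by_contra h
  obtain ⟨y, hy⟩ := hdown x h
  have := hgrade y x hy
  omega

lemma mulVec_basisVec {a b : ℕ}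
    (M : Matrix {x : α // rk x = a} {x : α // rk x = b} ℚ) (y : α) (hy : rk y = b)
    (x : {x : α // rk x = a}) :
    M.mulVec (basisVec rk b y) x = M x ⟨y, hy⟩ := by
  have key : ∀ z : {x : α // rk x = b},
      M x z * basisVec rk b y z = if z = ⟨y, hy⟩ then M x z else 0 := by
    intro z
    simp only [basisVec]
    by_cases h : z.1 = y
    · rw [if_pos h, if_pos (Subtype.ext h), mul_one]
    · rw [if_neg h, if_neg (fun hh => h (by rw [hh])), mul_zero]
  simp only [Matrix.mulVec, dotProduct, key]
  rw [Finset.sum_ite_eq' Finset.univ (⟨y, hy⟩ : {x : α // rk x = b}) (fun z => M x z)]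
  simp

variable (t : ℕ → α)

lemma covered_by_t_unique (hgrade : ∀ x y : α, x ⋖ y → rk y = rk x + 1)
    (htchain : ∀ m : ℕ, t m ⋖ t (m + 1))
    (hcovt : ∀ m : ℕ, {z : α | z ⋖ t m}.ncard ≤ 1)
    (m : ℕ) (z : α) (hz : z ⋖ t (m + 1)) : z = t m := by
  by_contra hne
  have hsub : ({z, t m} : Set α) ⊆ {w : α | w ⋖ t (m + 1)} := by
    rintro w (rfl | rfl)
    · exact hz
    · exact htchain m
  have h2 := Set.ncard_le_ncard hsub (covBy_below_finite rk hgrade (t (m + 1)))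
  rw [Set.ncard_pair hne] at h2
  have := hcovt (m + 1)
  omega

lemma duMat_zero_basis (hgrade : ∀ x y : α, x ⋖ y → rk y = rk x + 1)
    (hdown : ∀ x : α, x ≠ ⊥ → ∃ y : α, y ⋖ x) (r : ℕ)
    (hD1 : ∀ x : α, {z : α | x ⋖ z}.ncard = {y : α | y ⋖ x}.ncard + r)
    (hrkt : ∀ m : ℕ, rk (t m) = m) :
    (duMat rk 0).mulVec (basisVec rk 0 (t 0)) = (r : ℚ) • basisVec rk 0 (t 0) := by
  funext x
  have hx : x.1 = t 0 := by
    rw [rk_zero_eq_bot rk hgrade hdown x.1 x.2, rk_zero_eq_bot rk hgrade hdown (t 0) (hrkt 0)]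
  rw [mulVec_basisVec rk _ _ (hrkt 0), duMat_apply rk hgrade]
  have hxb : x.1 = (⊥ : α) := rk_zero_eq_bot rk hgrade hdown x.1 x.2
  have hset : {z : α | x.1 ⋖ z ∧ t 0 ⋖ z} = {z : α | x.1 ⋖ z} := by
    ext z; simp [hx]
  rw [hset, hD1 x.1]
  have hempty : {y : α | y ⋖ x.1} = ∅ := by
    ext y
    simp only [Set.mem_setOf_eq, Set.mem_empty_iff_false, iff_false]
    intro hy
    exact absurd (hxb ▸ hy.lt) (not_lt_bot)
  rw [hempty]
  simp [Pi.smul_apply, basisVec, hx]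

lemma duMat_succ_basis (hgrade : ∀ x y : α, x ⋖ y → rk y = rk x + 1) (r : ℕ)
    (hD1 : ∀ x : α, {z : α | x ⋖ z}.ncard = {y : α | y ⋖ x}.ncard + r)
    (hD2 : ∀ x y : α, x ≠ y →
      {z : α | z ⋖ x ∧ z ⋖ y}.ncard = {z : α | x ⋖ z ∧ y ⋖ z}.ncard)
    (htchain : ∀ m : ℕ, t m ⋖ t (m + 1))
    (hrkt : ∀ m : ℕ, rk (t m) = m)
    (hcovt : ∀ m : ℕ, {z : α | z ⋖ t m}.ncard ≤ 1)
    (m : ℕ) :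
    (duMat rk (m + 1)).mulVec (basisVec rk (m + 1) (t (m + 1)))
      = (upMat rk m).mulVec (basisVec rk m (t m))
        + (r : ℚ) • basisVec rk (m + 1) (t (m + 1)) := by
  funext x
  rw [Pi.add_apply, mulVec_basisVec rk _ _ (hrkt (m + 1)), mulVec_basisVec rk _ _ (hrkt m),
    duMat_apply rk hgrade]
  have hup : upMat rk m x ⟨t m, hrkt m⟩ = if t m ⋖ x.1 then 1 else 0 := rfl
  rw [hup]
  rcases eq_or_ne x.1 (t (m + 1)) with h | h
  · rw [h]
    simp only [and_self]
    rw [hD1 (t (m + 1))]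
    have hone : {z : α | z ⋖ t (m + 1)} = {t m} := by
      ext z
      simp only [Set.mem_setOf_eq, Set.mem_singleton_iff]
      exact ⟨covered_by_t_unique rk t hgrade htchain hcovt m z, fun hz => hz ▸ htchain m⟩
    rw [hone, Set.ncard_singleton, if_pos (htchain m)]
    push_cast
    simp [Pi.smul_apply, basisVec, h]
  · rw [← hD2 x.1 (t (m + 1)) h]
    have hbz : ((r : ℚ) • basisVec rk (m + 1) (t (m + 1))) x = 0 := by
      simp [Pi.smul_apply, basisVec, h]
    rw [hbz, add_zero]
    by_cases hc : t m ⋖ x.1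
    · have hone : {z : α | z ⋖ x.1 ∧ z ⋖ t (m + 1)} = {t m} := by
        ext z
        simp only [Set.mem_setOf_eq, Set.mem_singleton_iff]
        constructor
        · rintro ⟨_, hz2⟩; exact covered_by_t_unique rk t hgrade htchain hcovt m z hz2
        · rintro rfl; exact ⟨hc, htchain m⟩
      rw [hone, Set.ncard_singleton, if_pos hc]
      norm_num
    · have hnone : {z : α | z ⋖ x.1 ∧ z ⋖ t (m + 1)} = ∅ := by
        ext z
        simp only [Set.mem_setOf_eq, Set.mem_empty_iff_false, iff_false, not_and]
        intro hz1 hz2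
        exact hc (covered_by_t_unique rk t hgrade htchain hcovt m z hz2 ▸ hz1)
      rw [hnone, Set.ncard_empty, if_neg hc]
      norm_num

end Main1

section Main2

set_option linter.unusedSectionVars false

open Classical

variable [PartialOrder α] (rk : α → ℕ) [∀ n : ℕ, Fintype {x : α // rk x = n}]

/-- `DU_{m+j} (U^j v) = U^j (DU_m v) + j r U^j v`. -/
lemma duMat_upIter (hgrade : ∀ x y : α, x ⋖ y → rk y = rk x + 1) (r : ℕ)
    (hD1 : ∀ x : α, {z : α | x ⋖ z}.ncard = {y : α | y ⋖ x}.ncard + r)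
    (hD2 : ∀ x y : α, x ≠ y →
      {z : α | z ⋖ x ∧ z ⋖ y}.ncard = {z : α | x ⋖ z ∧ y ⋖ z}.ncard)
    (m : ℕ) (v : {x : α // rk x = m} → ℚ) :
    ∀ j : ℕ, (duMat rk (m + j)).mulVec (upIter rk m j v)
      = upIter rk m j ((duMat rk m).mulVec v) + ((j : ℚ) * r) • upIter rk m j v
  | 0 => by
    show (duMat rk m).mulVec v = (duMat rk m).mulVec v + (((0 : ℕ) : ℚ) * r) • v
    simp
  | j + 1 => by
    show (duMat rk (m + j + 1)).mulVec ((upMat rk (m + j)).mulVec (upIter rk m j v)) = _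
    rw [duMat_succ_eq rk hgrade r hD1 hD2 (m + j), Matrix.add_mulVec,
      Matrix.smul_mulVec, Matrix.one_mulVec,
      Matrix.mulVec_mulVec, Matrix.mul_assoc, ← Matrix.mulVec_mulVec]
    have hdu : (upMat rk (m + j))ᵀ * upMat rk (m + j) = duMat rk (m + j) := rfl
    rw [hdu, duMat_upIter hgrade r hD1 hD2 m v j, Matrix.mulVec_add, Matrix.mulVec_smul]
    have hs1 : upIter rk m (j + 1) ((duMat rk m).mulVec v)
        = (upMat rk (m + j)).mulVec (upIter rk m j ((duMat rk m).mulVec v)) := rfl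
    have hs2 : upIter rk m (j + 1) v = (upMat rk (m + j)).mulVec (upIter rk m j v) := rfl
    rw [hs1, hs2]
    push_cast
    module

lemma genFac_succ (r k j : ℕ) : genFac r k (j + 1) = genFac r k j * (r * (j + 1) + k) :=
  Finset.prod_range_succ _ _

lemma genFac_cast_ne_zero (r k : ℕ) (hk : 0 < k) (j : ℕ) : ((genFac r k j : ℚ)) ≠ 0 := by
  have : genFac r k j ≠ 0 := by
    apply Finset.prod_ne_zero_iff.mpr
    intro i _
    omega
  exact_mod_cast this

end Main2

section Main3

set_option linter.unusedSectionVars false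

open Classical

variable [PartialOrder α] [OrderBot α] (rk : α → ℕ) [∀ n : ℕ, Fintype {x : α // rk x = n}]

lemma coeff_identity (r k : ℕ) (hk : 0 < k) (j : ℕ) :
    ((-1 : ℚ) ^ j / (genFac r k (j + 1) : ℚ)) * ((r : ℚ) * ((j : ℚ) + 1) + (k : ℚ))
      = (-1 : ℚ) ^ j / (genFac r k j : ℚ) := by
  have h1 := genFac_cast_ne_zero r k hk j
  have hk' : (0 : ℚ) < (k : ℚ) := by exact_mod_cast hk
  have h2 : ((r : ℚ) * ((j : ℚ) + 1) + (k : ℚ)) ≠ 0 := by positivity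
  rw [genFac_succ]
  push_cast
  field_simp

lemma per_term (r : ℕ)
    (hgrade : ∀ x y : α, x ⋖ y → rk y = rk x + 1)
    (hdown : ∀ x : α, x ≠ ⊥ → ∃ y : α, y ⋖ x)
    (hD1 : ∀ x : α, {z : α | x ⋖ z}.ncard = {y : α | y ⋖ x}.ncard + r)
    (hD2 : ∀ x y : α, x ≠ y →
      {z : α | z ⋖ x ∧ z ⋖ y}.ncard = {z : α | x ⋖ z ∧ y ⋖ z}.ncard)
    (t : ℕ → α) (htchain : ∀ m : ℕ, t m ⋖ t (m + 1))
    (hrkt : ∀ m : ℕ, rk (t m) = m)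
    (hcovt : ∀ m : ℕ, {z : α | z ⋖ t m}.ncard ≤ 1)
    (k : ℕ) (hk : 0 < k) (m j n : ℕ) (h : m + j = n) :
    (duMat rk n + (k : ℚ) • 1).mulVec
        (((-1 : ℚ) ^ j / (genFac r k (j + 1) : ℚ)) •
          rankCast rk (m + j) n (upIter rk m j (basisVec rk m (t m))))
      = ((-1 : ℚ) ^ j / (genFac r k (j + 1) : ℚ)) •
          rankCast rk (m - 1 + (j + 1)) n
            (upIter rk (m - 1) (j + 1) (basisVec rk (m - 1) (t (m - 1))))
        + ((-1 : ℚ) ^ j / (genFac r k j : ℚ)) •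
            rankCast rk (m + j) n (upIter rk m j (basisVec rk m (t m))) := by
  subst h
  have hco := coeff_identity r k hk j
  rw [rankCast_self, Matrix.mulVec_smul, Matrix.add_mulVec, Matrix.smul_mulVec,
    Matrix.one_mulVec, duMat_upIter rk hgrade r hD1 hD2 m (basisVec rk m (t m)) j]
  rcases m with _ | m'
  · rw [duMat_zero_basis rk t hgrade hdown r hD1 hrkt, upIter_smul,
      rankCast_ne rk (0 - 1 + (j + 1)) (0 + j) (by omega)]
    match_scalars
    · linear_combination hco
  · rw [duMat_succ_basis rk t hgrade r hD1 hD2 htchain hrkt hcovt m', upIter_add, upIter_smul,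
      upIter_succ_left]
    simp only [Nat.add_sub_cancel]
    have hcast : rankCast rk (m' + 1 - 1 + (j + 1)) (m' + 1 + j)
          (upIter rk (m' + 1 - 1) (j + 1) (basisVec rk (m' + 1 - 1) (t m')))
        = rankCast rk (m' + (j + 1)) (m' + 1 + j)
          (upIter rk m' (j + 1) (basisVec rk m' (t m'))) := rfl
    rw [hcast]
    match_scalars
    · ring
    · linear_combination hco
end Main3

open Classical in
/-- For an `r`-differential poset, a positive integer `k`, and a saturated chain
`t_0 ⋖ t_1 ⋖ ⋯` with `rank(t_m) = m` in which each `t_m` covers at most one element,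
the vector `v_{n,k} = Σ_{j=0}^n (-1)^j U^j t_{n-j} / (j+1)!_{r,k}` satisfies
`(DU_n + kI) v_{n,k} = t_n`. -/
theorem du_add_k_mulVec_vVec [PartialOrder α] [OrderBot α]
    (rk : α → ℕ) (r : ℕ) [∀ n : ℕ, Fintype {x : α // rk x = n}]
    (hr : 1 ≤ r) (hbot : rk ⊥ = 0)
    (hgrade : ∀ x y : α, x ⋖ y → rk y = rk x + 1)
    (hdown : ∀ x : α, x ≠ ⊥ → ∃ y : α, y ⋖ x)
    (hD1 : ∀ x : α, {z : α | x ⋖ z}.ncard = {y : α | y ⋖ x}.ncard + r)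
    (hD2 : ∀ x y : α, x ≠ y →
      {z : α | z ⋖ x ∧ z ⋖ y}.ncard = {z : α | x ⋖ z ∧ y ⋖ z}.ncard)
    (t : ℕ → α) (htchain : ∀ m : ℕ, t m ⋖ t (m + 1))
    (hrkt : ∀ m : ℕ, rk (t m) = m)
    (hcovt : ∀ m : ℕ, {z : α | z ⋖ t m}.ncard ≤ 1)
    (k : ℕ) (hk : 0 < k) (n : ℕ) :
    (duMat rk n + (k : ℚ) • 1).mulVec (vVec rk t r k n) = basisVec rk n (t n) := by
  set Tm : ℕ → ({x : α // rk x = n} → ℚ) := fun j =>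
    rankCast rk ((n - j) + j) n (upIter rk (n - j) j (basisVec rk (n - j) (t (n - j)))) with hTm
  set c : ℕ → ℚ := fun j => (-1 : ℚ) ^ j / (genFac r k (j + 1) : ℚ) with hc
  set d : ℕ → ℚ := fun j => (-1 : ℚ) ^ j / (genFac r k j : ℚ) with hd
  have hv : vVec rk t r k n = ∑ j ∈ Finset.range (n + 1), c j • Tm j := rfl
  have key : ∀ j ∈ Finset.range (n + 1),
      (duMat rk n + (k : ℚ) • 1).mulVec (c j • Tm j) = c j • Tm (j + 1) + d j • Tm j := by
    intro j hj
    have hjn : j ≤ n := Nat.lt_succ_iff.mp (Finset.mem_range.mp hj)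
    exact per_term rk r hgrade hdown hD1 hD2 t htchain hrkt hcovt k hk (n - j) j n
      (Nat.sub_add_cancel hjn)
  rw [hv]
  rw [show (duMat rk n + (k : ℚ) • 1).mulVec (∑ j ∈ Finset.range (n + 1), c j • Tm j)
      = ∑ j ∈ Finset.range (n + 1), (duMat rk n + (k : ℚ) • 1).mulVec (c j • Tm j) by
    simp only [← Matrix.mulVecLin_apply, map_sum]]
  rw [Finset.sum_congr rfl key, Finset.sum_add_distrib]
  have hTm0 : Tm 0 = basisVec rk n (t n) := by
    simp only [hTm]
    exact rankCast_self rk n _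
  have hTmtop : Tm (n + 1) = 0 := by
    simp only [hTm]
    exact rankCast_ne rk ((n - (n + 1)) + (n + 1)) n (by omega) _
  have hcd : ∀ j : ℕ, c j = -(d (j + 1)) := by
    intro j
    simp only [hc, hd, pow_succ]
    ring
  have h1 : ∑ j ∈ Finset.range (n + 1), c j • Tm (j + 1)
      = -∑ j ∈ Finset.range (n + 1), d (j + 1) • Tm (j + 1) := by
    rw [← Finset.sum_neg_distrib]
    exact Finset.sum_congr rfl fun j _ => by rw [hcd j, neg_smul]
  have h2 : ∑ j ∈ Finset.range (n + 1), d j • Tm j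
      = d 0 • Tm 0 + ∑ j ∈ Finset.range n, d (j + 1) • Tm (j + 1) :=
    (Finset.sum_range_succ' _ n).trans (add_comm _ _)
  have h3 : ∑ j ∈ Finset.range (n + 1), d (j + 1) • Tm (j + 1)
      = ∑ j ∈ Finset.range n, d (j + 1) • Tm (j + 1) + d (n + 1) • Tm (n + 1) :=
    Finset.sum_range_succ _ n
  have hd0 : d 0 = 1 := by simp [hd, genFac]
  rw [h1, h2, h3, hTmtop, hTm0, hd0, smul_zero, add_zero, one_smul]
  abel
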